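/- Let H be k-edge-connected with k odd, and U ⊆ E(H). Then the family F_1(H) = { S nonempty proper : d(S) = k, d_U(S) ≥ 1 } is laminar: any two members A, B of F_1(H) satisfy A ⊆ B, B ⊆ A, or A ∩ B = ∅, or A ∪ B = V. -/

import Mathlib

open Finset

/-- Number of edges of the multigraph (edges indexed by `ι` with endpoint maps
`fst`, `snd`) that lie in `J` and have exactly one endpoint in `S`. -/
def cutCard {V ι : Type} [DecidableEq V] [DecidableEq ι]
    (fst snd : ι → V) (J : Finset ι) (S : Finset V) : ℕ :=
  (J.filter (fun e => (fst e ∈ S ∧ snd e ∉ S) ∨ (snd e ∈ S ∧ fst e ∉ S))).card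

/-- Number of edges in `J` with one endpoint in `X` and the other in `Y`. -/
def btw {V ι : Type} [DecidableEq V] [DecidableEq ι]
    (fst snd : ι → V) (J : Finset ι) (X Y : Finset V) : ℕ :=
  (J.filter (fun e => (fst e ∈ X ∧ snd e ∈ Y) ∨ (fst e ∈ Y ∧ snd e ∈ X))).card

lemma cutCard_eq_sum {V ι : Type} [DecidableEq V] [DecidableEq ι]
    (fst snd : ι → V) (J : Finset ι) (S : Finset V) :
    cutCard fst snd J S =
      ∑ e ∈ J, if (fst e ∈ S ∧ snd e ∉ S) ∨ (snd e ∈ S ∧ fst e ∉ S) then 1 else 0 :=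
  Finset.card_filter _ _

lemma btw_eq_sum {V ι : Type} [DecidableEq V] [DecidableEq ι]
    (fst snd : ι → V) (J : Finset ι) (X Y : Finset V) :
    btw fst snd J X Y =
      ∑ e ∈ J, if (fst e ∈ X ∧ snd e ∈ Y) ∨ (fst e ∈ Y ∧ snd e ∈ X) then 1 else 0 :=
  Finset.card_filter _ _

lemma identity1 {V ι : Type} [DecidableEq V] [DecidableEq ι]
    (fst snd : ι → V) (J : Finset ι) (A B : Finset V) :
    cutCard fst snd J A + cutCard fst snd J B =
      cutCard fst snd J (A ∩ B) + cutCard fst snd J (A ∪ B) +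
        2 * btw fst snd J (A \ B) (B \ A) := by
  simp only [cutCard_eq_sum, btw_eq_sum, Finset.mul_sum, ← Finset.sum_add_distrib]
  refine Finset.sum_congr rfl fun e _ => ?_
  by_cases h1 : fst e ∈ A <;> by_cases h2 : fst e ∈ B <;>
    by_cases h3 : snd e ∈ A <;> by_cases h4 : snd e ∈ B <;>
    simp [h1, h2, h3, h4]

lemma identity2 {V ι : Type} [Fintype V] [DecidableEq V] [DecidableEq ι]
    (fst snd : ι → V) (J : Finset ι) (A B : Finset V) :
    cutCard fst snd J A + cutCard fst snd J B =
      cutCard fst snd J (A \ B) + cutCard fst snd J (B \ A) +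
        2 * btw fst snd J (A ∩ B) (Finset.univ \ (A ∪ B)) := by
  simp only [cutCard_eq_sum, btw_eq_sum, Finset.mul_sum, ← Finset.sum_add_distrib]
  refine Finset.sum_congr rfl fun e _ => ?_
  by_cases h1 : fst e ∈ A <;> by_cases h2 : fst e ∈ B <;>
    by_cases h3 : snd e ∈ A <;> by_cases h4 : snd e ∈ B <;>
    simp [h1, h2, h3, h4]

lemma identity3 {V ι : Type} [DecidableEq V] [DecidableEq ι]
    (fst snd : ι → V) (J : Finset ι) (A B : Finset V) :
    cutCard fst snd J (A ∩ B) + cutCard fst snd J (A \ B) =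
      cutCard fst snd J A + 2 * btw fst snd J (A ∩ B) (A \ B) := by
  simp only [cutCard_eq_sum, btw_eq_sum, Finset.mul_sum, ← Finset.sum_add_distrib]
  refine Finset.sum_congr rfl fun e _ => ?_
  by_cases h1 : fst e ∈ A <;> by_cases h2 : fst e ∈ B <;>
    by_cases h3 : snd e ∈ A <;> by_cases h4 : snd e ∈ B <;>
    simp [h1, h2, h3, h4]

theorem stmt18 {V ι : Type} [Fintype V] [DecidableEq V] [DecidableEq ι]
    (fst snd : ι → V) (J U : Finset ι) (hU : U ⊆ J) (k : ℕ) (hk : Odd k)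
    (hconn : ∀ S : Finset V, S.Nonempty → S ≠ Finset.univ → k ≤ cutCard fst snd J S)
    (F₁ : Finset V → Prop)
    (hF₁ : ∀ S, F₁ S ↔ S.Nonempty ∧ S ≠ Finset.univ ∧
        cutCard fst snd J S = k ∧ 1 ≤ cutCard fst snd U S) :
    ∀ A B, F₁ A → F₁ B →
      A ⊆ B ∨ B ⊆ A ∨ A ∩ B = ∅ ∨ A ∪ B = Finset.univ := by
  intro A B hA hB
  rw [hF₁] at hA hB
  obtain ⟨hAne, hAuniv, hAcut, -⟩ := hA
  obtain ⟨hBne, hBuniv, hBcut, -⟩ := hB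
  by_contra hcon
  push_neg at hcon
  obtain ⟨hAB, hBA, hint, huni⟩ := hcon
  -- all four corner sets are nonempty and proper
  have hABne : (A \ B).Nonempty := by
    obtain ⟨x, hx, hx'⟩ := Finset.not_subset.mp hAB
    exact ⟨x, Finset.mem_sdiff.mpr ⟨hx, hx'⟩⟩
  have hBAne : (B \ A).Nonempty := by
    obtain ⟨x, hx, hx'⟩ := Finset.not_subset.mp hBA
    exact ⟨x, Finset.mem_sdiff.mpr ⟨hx, hx'⟩⟩
  have hintne : (A ∩ B).Nonempty := hint
  have hintuniv : A ∩ B ≠ Finset.univ := by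
    intro h
    exact hAuniv (Finset.univ_subset_iff.mp (h ▸ Finset.inter_subset_left))
  have hunine : (A ∪ B).Nonempty := hAne.mono Finset.subset_union_left
  have hABuniv : A \ B ≠ Finset.univ := by
    intro h
    obtain ⟨x, hx⟩ := hBne
    have : x ∈ A \ B := h ▸ Finset.mem_univ x
    exact (Finset.mem_sdiff.mp this).2 hx
  have hBAuniv : B \ A ≠ Finset.univ := by
    intro h
    obtain ⟨x, hx⟩ := hAne
    have : x ∈ B \ A := h ▸ Finset.mem_univ x
    exact (Finset.mem_sdiff.mp this).2 hx
  have h1 := hconn _ hintne hintuniv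
  have h2 := hconn _ hunine huni
  have h3 := hconn _ hABne hABuniv
  have h4 := hconn _ hBAne hBAuniv
  have e1 := identity1 fst snd J A B
  have e2 := identity2 fst snd J A B
  have e3 := identity3 fst snd J A B
  rw [hAcut, hBcut] at e1 e2
  -- forces cutCard (A∩B) = k and cutCard (A\B) = k
  have hintk : cutCard fst snd J (A ∩ B) = k := by omega
  have hABk : cutCard fst snd J (A \ B) = k := by omega
  rw [hintk, hABk, hAcut] at e3
  obtain ⟨m, hm⟩ := hk
  omega
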